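/- arXiv:2310.15900 — 2 statements merged into one kernel-verified Lean document; each statement's English description precedes it below -/
import Mathlib

section
/- Let n be a friend of 10 and let k = ω(n). Then v_5(n) ≤ (k − 1)² + 1. -/
open ArithmeticFunction
open scoped ArithmeticFunction.sigma
section Helpers
open Finset

def S (x m : ℕ) : ℕ := ∑ i ∈ range m, x ^ i

lemma S_succ (x m : ℕ) : S x (m+1) = S x m + x ^ m := Finset.sum_range_succ _ _

lemma L11 (x m : ℕ) (hx : 1 ≤ x) : (x - 1) * S x m + 1 = x ^ m := by
  induction m with
  | zero => simp [S]
  | succ m ih =>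
    obtain ⟨y, rfl⟩ : ∃ y, x = y + 1 := ⟨x - 1, by omega⟩
    rw [S_succ, Nat.mul_add, pow_succ]
    have h1 : (y+1-1) * (y+1)^m + (y+1)^m = (y+1)^m * (y+1) := by simp; ring
    omega

lemma L1 (x b d : ℕ) : S x (b * d) = S x b * S (x ^ b) d := by
  induction d with
  | zero => simp [S]
  | succ d ih =>
    have h : b * (d+1) = b*d + b := by ring
    rw [h]
    show ∑ i ∈ range (b*d + b), x ^ i = _
    rw [Finset.sum_range_add, ← S]
    rw [ih, S_succ, Nat.mul_add]
    congr 1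
    rw [S, Finset.sum_mul]
    apply Finset.sum_congr rfl
    intro i _
    rw [← pow_mul, ← pow_add, add_comm]

lemma S_five (x : ℕ) : S x 5 = 1 + x + x^2 + x^3 + x^4 := by
  simp [S, Finset.sum_range_succ]

lemma L5' (x m : ℕ) : ((x:ℤ) - 1) ∣ (S x m : ℤ) - m := by
  have : (S x m : ℤ) = ∑ i ∈ range m, (x:ℤ)^i := by
    unfold S
    push_cast
    rfl
  rw [this]
  have h : ∀ i ∈ range m, ((x:ℤ) - 1) ∣ ((x:ℤ)^i - 1) := by
    intro i _
    simpa using sub_dvd_pow_sub_pow (x:ℤ) 1 i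
  have := Finset.dvd_sum (fun i hi => h i hi)
  simpa [Finset.sum_sub_distrib] using this

lemma L12 (q x m : ℕ) (hx : 1 ≤ x) (h1 : q ∣ x - 1) (h2 : q ∣ S x m) : q ∣ m := by
  have h1' : (q:ℤ) ∣ (x:ℤ) - 1 := by
    have := Int.natCast_dvd_natCast.mpr h1
    rwa [Int.ofNat_sub hx] at this
  have h2' : (q:ℤ) ∣ (S x m : ℤ) := Int.natCast_dvd_natCast.mpr h2
  have := L5' x m
  have : (q:ℤ) ∣ (m:ℤ) := by
    have hd := dvd_sub h2' (h1'.trans this)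
    simpa using hd
  exact_mod_cast this

lemma L4 (x : ℕ) (h : ∃ u, x = 1 + 5*u) : S x 5 % 25 = 5 := by
  obtain ⟨u, rfl⟩ := h
  have : S (1+5*u) 5 = 5 + 25*(2*u+10*u^2+25*u^3+25*u^4) := by
    rw [S_five]; ring
  omega

lemma L14 (x : ℕ) : ¬ (3 ∣ S x 5) := by
  intro h
  have h0 : ((S x 5 : ℕ) : ZMod 3) = 0 := by
    exact_mod_cast (ZMod.natCast_eq_zero_iff _ _).mpr h
  rw [S_five] at h0
  push_cast at h0
  revert h0
  have : ∀ c : ZMod 3, 1 + c + c^2 + c^3 + c^4 ≠ 0 := by decide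
  exact this x

lemma S_pos (x m : ℕ) (hm : 0 < m) : 0 < S x m := by
  unfold S
  have : x ^ 0 = 1 := pow_zero x
  calc 0 < 1 := one_pos
    _ = x ^ 0 := this.symm
    _ ≤ ∑ i ∈ range m, x ^ i := Finset.single_le_sum (f := fun i => x ^ i) (fun i _ => Nat.zero_le _) (Finset.mem_range.mpr hm)

lemma L13 (p b c : ℕ) (h : b ∣ c) : p^b - 1 ∣ p^c - 1 := by
  obtain ⟨d, rfl⟩ := h
  rcases Nat.eq_zero_or_pos p with rfl | hp
  · rcases Nat.eq_zero_or_pos b with rfl | hb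
    · simp
    · rcases Nat.eq_zero_or_pos d with rfl | hd
      · simp
      · have h1 : (0:ℕ)^b = 0 := Nat.zero_pow hb
        have h2 : (0:ℕ)^(b*d) = 0 := Nat.zero_pow (by positivity : 0 < b*d)
        simp [h1, h2]
  · have hx : 1 ≤ p ^ b := Nat.one_le_pow _ _ hp
    have := L11 (p^b) d hx
    rw [← pow_mul] at this
    exact ⟨S (p^b) d, by omega⟩

lemma padicValNat_prod {α : Type*} (s : Finset α) (f : α → ℕ)
    (hf : ∀ i ∈ s, f i ≠ 0) :
    padicValNat 5 (∏ i ∈ s, f i) = ∑ i ∈ s, padicValNat 5 (f i) := by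
  haveI : Fact (Nat.Prime 5) := ⟨by norm_num⟩
  classical
  induction s using Finset.cons_induction with
  | empty => simp
  | cons a s ha ih =>
    rw [Finset.prod_cons, Finset.sum_cons, padicValNat.mul (hf a (Finset.mem_cons_self a s))
      (Finset.prod_ne_zero_iff.mpr fun i hi => hf i (Finset.mem_cons_of_mem hi)),
      ih (fun i hi => hf i (Finset.mem_cons_of_mem hi))]

lemma S_cast_zmod (p m q : ℕ) : ((S p m : ℕ) : ZMod q) = ∑ i ∈ range m, (p : ZMod q)^i := by
  unfold S
  push_cast
  rfl

lemma modfive (p a : ℕ) (hp : p.Prime) (hp5 : p ≠ 5) (ha : Even a)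
    (h5 : 5 ∣ S p (a+1)) : p % 5 = 1 := by
  have hc0 : ((S p (a+1) : ℕ) : ZMod 5) = 0 := by
    exact_mod_cast (ZMod.natCast_eq_zero_iff _ _).mpr h5
  rw [S_cast_zmod] at hc0
  set c : ZMod 5 := (p : ZMod 5) with hc
  have hcne : c ≠ 0 := by
    rw [hc, Ne, ZMod.natCast_eq_zero_iff]
    intro hdvd
    exact hp5 ((Nat.prime_dvd_prime_iff_eq (by norm_num) hp).mp hdvd).symm
  have h1 : c ^ (a+1) = 1 := by
    have := geom_sum_mul c (a+1)
    rw [hc0, zero_mul] at this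
    have : c ^ (a+1) - 1 = 0 := this.symm
    have := sub_eq_zero.mp this
    simpa using this
  haveI : Fact (Nat.Prime 5) := ⟨by norm_num⟩
  have h2 : c ^ 4 = 1 := ZMod.pow_card_sub_one_eq_one hcne
  have hgcd : Nat.gcd (a+1) 4 = 1 := by
    have hodd : Odd (a+1) := Even.add_one ha
    have h2' : Nat.Coprime (a+1) 2 := Nat.coprime_two_right.mpr hodd
    have : Nat.Coprime (a+1) (2^2) := Nat.Coprime.pow_right 2 h2'
    simpa [Nat.Coprime] using this
  have hord : orderOf c ∣ 1 := by
    rw [← hgcd]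
    exact Nat.dvd_gcd (orderOf_dvd_of_pow_eq_one h1) (orderOf_dvd_of_pow_eq_one h2)
  have : c = 1 := orderOf_eq_one_iff.mp (Nat.eq_one_of_dvd_one hord)
  have : (p : ZMod 5) = ((1:ℕ) : ZMod 5) := by simpa using this
  have := (ZMod.natCast_eq_natCast_iff _ _ _).mp this
  simpa [Nat.ModEq] using this

instance fact5 : Fact (Nat.Prime 5) := ⟨by norm_num⟩

lemma prodN (p r : ℕ) : S p (5^r) = ∏ s ∈ Finset.Icc 1 r, S (p^(5^(s-1))) 5 := by
  induction r with
  | zero => simp [S]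
  | succ r ih =>
    have h : (5:ℕ)^(r+1) = 5^r * 5 := pow_succ 5 r
    rw [h, L1, ih, Finset.prod_Icc_succ_top (by omega : 1 ≤ r + 1)]
    simp

lemma N_mod (p s : ℕ) (hp : 2 ≤ p) (h51 : 5 ∣ p - 1) :
    S (p^(5^(s-1))) 5 % 25 = 5 := by
  set x := p^(5^(s-1)) with hx
  have hx1 : 1 ≤ x := Nat.one_le_pow _ _ (by omega)
  have h5x : 5 ∣ x - 1 := by
    have := L13 p 1 (5^(s-1)) (one_dvd _)
    rw [pow_one] at this
    exact h51.trans this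
  exact L4 x ⟨(x-1)/5, by omega⟩

lemma N_big (p s : ℕ) (hp : 2 ≤ p) : 31 ≤ S (p^(5^(s-1))) 5 := by
  set x := p^(5^(s-1)) with hx
  have hx2 : 2 ≤ x := by
    have : p^1 ≤ x := Nat.pow_le_pow_right (by omega) (Nat.one_le_pow _ _ (by norm_num))
    rw [pow_one] at this
    omega
  have h2 : 4 ≤ x^2 := by nlinarith
  have h3 : 8 ≤ x^3 := by nlinarith
  have h4 : 16 ≤ x^4 := by nlinarith
  rw [S_five]
  omega

lemma vN (p s : ℕ) (hp : 2 ≤ p) (h51 : 5 ∣ p - 1) :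
    padicValNat 5 (S (p^(5^(s-1))) 5) = 1 := by
  have h := N_mod p s hp h51
  set N := S (p^(5^(s-1))) 5 with hN
  obtain ⟨j, hj⟩ : ∃ j, N = 5 * (5*j+1) := ⟨N/25, by omega⟩
  rw [hj, padicValNat.mul (by norm_num) (by omega)]
  rw [padicValNat.self (by norm_num), padicValNat.eq_zero_of_not_dvd (by omega)]

lemma N_dvd_pow_sub_one (p s : ℕ) (hp : 2 ≤ p) (hs : 1 ≤ s) :
    S (p^(5^(s-1))) 5 ∣ p^(5^s) - 1 := by
  set x := p^(5^(s-1)) with hx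
  have hx1 : 1 ≤ x := Nat.one_le_pow _ _ (by omega)
  have h := L11 x 5 hx1
  have h1 : 5^(s-1)*5 = 5^s := by
    rw [← pow_succ]
    congr 1
    omega
  have hxp : x^5 = p^(5^s) := by rw [hx, ← pow_mul, h1]
  have h2 : S x 5 * (x - 1) + 1 = p ^ (5^s) := by
    rw [mul_comm]
    rw [h]
    exact hxp
  exact ⟨x - 1, by omega⟩

open ArithmeticFunction in
lemma key (n p a : ℕ) (hn0 : n ≠ 0) (hp : p.Prime) (hp5 : p ≠ 5) (ha : Even a)
    (hdvd : S p (a+1) ∣ σ 1 n) (heq : 5 * σ 1 n = 9 * n) :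
    padicValNat 5 (S p (a+1)) ≤ (n.primeFactors.erase 5).card := by
  by_cases h5 : 5 ∣ S p (a+1)
  · -- main case
    have hpm5 : p % 5 = 1 := modfive p a hp hp5 ha h5
    have hp2 : 2 ≤ p := hp.two_le
    have h51 : 5 ∣ p - 1 := by omega
    set r := padicValNat 5 (a+1) with hrdef
    have ha1 : a + 1 ≠ 0 := by omega
    have hr : 5^r ∣ a+1 := pow_padicValNat_dvd
    have hnr : ¬ 5^(r+1) ∣ a+1 := pow_succ_padicValNat_not_dvd ha1
    obtain ⟨b, hb⟩ := hr
    have hb0 : b ≠ 0 := by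
      rintro rfl; simp at hb
    have h5b : ¬ 5 ∣ b := by
      rintro ⟨c, rfl⟩
      exact hnr ⟨c, by rw [hb]; ring⟩
    have hsplit : S p (a+1) = S p (5^r) * S (p^(5^r)) b := by
      rw [hb]; exact L1 p (5^r) b
    -- G has no factor 5
    have hG5 : ¬ 5 ∣ S (p^(5^r)) b := by
      intro hdG
      apply h5b
      apply L12 5 (p^(5^r)) b (Nat.one_le_pow _ _ (by omega)) _ hdG
      have := L13 p 1 (5^r) (one_dvd _)
      rw [pow_one] at this
      exact h51.trans this
    -- the valuation equals r
    have hNne : ∀ s ∈ Finset.Icc 1 r, S (p^(5^(s-1))) 5 ≠ 0 :=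
      fun s _ => (S_pos _ 5 (by norm_num)).ne'
    have hval : padicValNat 5 (S p (a+1)) = r := by
      rw [hsplit, padicValNat.mul ((S_pos _ _ (by positivity)).ne')
          ((S_pos _ _ (Nat.pos_of_ne_zero hb0)).ne'),
        padicValNat.eq_zero_of_not_dvd hG5, add_zero, prodN,
        padicValNat_prod _ _ hNne]
      rw [Finset.sum_congr rfl (fun s _ => vN p s hp2 h51)]
      simp [Nat.card_Icc]
    rw [hval]
    -- injection from Icc 1 r into primeFactors.erase 5
    set q : ℕ → ℕ := fun s => (S (p^(5^(s-1))) 5 / 5).minFac with hqdef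
    have hqprop : ∀ s ∈ Finset.Icc 1 r, (q s).Prime ∧ q s ∣ S (p^(5^(s-1))) 5 ∧
        q s ≠ 5 ∧ q s ≠ 3 := by
      intro s hs
      have hmod := N_mod p s hp2 h51
      have hbig := N_big p s hp2
      set N := S (p^(5^(s-1))) 5 with hN
      have hN5 : 5 ∣ N := by omega
      have hdvd1 : N / 5 ∣ N := Nat.div_dvd_of_dvd hN5
      have hne1 : N / 5 ≠ 1 := by omega
      have hqp : (q s).Prime := Nat.minFac_prime hne1
      have hqN : q s ∣ N := (Nat.minFac_dvd _).trans hdvd1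
      have hq5 : q s ≠ 5 := by
        intro h
        have h5d : q s ∣ N / 5 := Nat.minFac_dvd _
        rw [h] at h5d
        obtain ⟨c, hc⟩ := h5d
        omega
      have hq3 : q s ≠ 3 := by
        intro h
        exact L14 _ (h ▸ hqN)
      exact ⟨hqp, hqN, hq5, hq3⟩
    have hmem : ∀ s ∈ Finset.Icc 1 r, q s ∈ n.primeFactors.erase 5 := by
      intro s hs
      obtain ⟨hqp, hqN, hq5, hq3⟩ := hqprop s hs
      rw [Finset.mem_erase, Nat.mem_primeFactors]
      refine ⟨hq5, hqp, ?_, hn0⟩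
      -- q s ∣ n
      have h1 : S (p^(5^(s-1))) 5 ∣ S p (a+1) := by
        rw [hsplit, prodN]
        exact dvd_mul_of_dvd_left (Finset.dvd_prod_of_mem _ hs) _
      have h2 : q s ∣ σ 1 n := (hqN.trans h1).trans hdvd
      have h3 : q s ∣ 9 * n := by
        rw [← heq]
        exact h2.mul_left 5
      rcases (Nat.Prime.dvd_mul hqp).mp h3 with h | h
      · exfalso
        have h33 : q s ∣ 3 * 3 := by
          have h9 : (9:ℕ) = 3 * 3 := by norm_num
          rwa [h9] at h
        have h3' : q s ∣ 3 := by
          rcases (Nat.Prime.dvd_mul hqp).mp h33 with h' | h' <;> exact h'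
        exact hq3 ((Nat.prime_dvd_prime_iff_eq hqp (by norm_num)).mp h3')
      · exact h
    have hinj : Set.InjOn q (Finset.Icc 1 r) := by
      have hlt : ∀ s s', s ∈ Finset.Icc 1 r → s' ∈ Finset.Icc 1 r → s < s' → q s ≠ q s' := by
        intro s s' hs hs' hss heqq
        obtain ⟨hqp, hqN, hq5, _⟩ := hqprop s hs
        obtain ⟨_, hqN', _, _⟩ := hqprop s' hs'
        have hs1 : 1 ≤ s := (Finset.mem_Icc.mp hs).1
        have hdvd1 : q s ∣ p^(5^s) - 1 := hqN.trans (N_dvd_pow_sub_one p s hp2 hs1)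
        have hdvd2 : p^(5^s) - 1 ∣ p^(5^(s'-1)) - 1 := L13 p _ _ (pow_dvd_pow 5 (by omega))
        have hdvd3 : q s ∣ p^(5^(s'-1)) - 1 := hdvd1.trans hdvd2
        have : q s ∣ 5 := by
          apply L12 (q s) (p^(5^(s'-1))) 5 (Nat.one_le_pow _ _ (by omega)) hdvd3
          rw [heqq]; exact hqN'
        exact hq5 ((Nat.prime_dvd_prime_iff_eq hqp (by norm_num)).mp this)
      intro s hs s' hs' heqq
      by_contra hne
      rcases lt_or_gt_of_ne hne with h | h
      · exact hlt s s' (by simpa using hs) (by simpa using hs') h heqq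
      · exact hlt s' s (by simpa using hs') (by simpa using hs) h heqq.symm
    have := Finset.card_le_card_of_injOn q hmem hinj
    simpa [Nat.card_Icc] using this
  · rw [padicValNat.eq_zero_of_not_dvd h5]
    exact Nat.zero_le _

lemma L12' (q x m : ℕ) (hx : 1 ≤ x) (h1 : q ∣ x - 1) (h2 : q ∣ m) : q ∣ S x m := by
  have h1' : (q:ℤ) ∣ (x:ℤ) - 1 := by
    have := Int.natCast_dvd_natCast.mpr h1
    rwa [Int.ofNat_sub hx] at this
  have h2' : (q:ℤ) ∣ (m:ℤ) := Int.natCast_dvd_natCast.mpr h2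
  have h3 := L5' x m
  have : (q:ℤ) ∣ (S x m : ℤ) := by
    have := dvd_add (h1'.trans h3) h2'
    simpa using this
  exact_mod_cast this

lemma five_ndvd_S5 (m : ℕ) : ¬ 5 ∣ S 5 (m+1) := by
  have h : S 5 (m+1) = 5 * S 5 m + 1 := by
    unfold S
    rw [Finset.sum_range_succ' (fun i => 5^i) m]
    rw [Finset.mul_sum]
    simp [pow_succ, mul_comm]
  omega

open ArithmeticFunction in
lemma sigma_pp (p a : ℕ) (hp : p.Prime) : σ 1 (p^a) = S p (a+1) := by
  rw [sigma_one_apply, Nat.sum_divisors_prime_pow hp]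
  rfl

open ArithmeticFunction in
lemma sigma_pp_dvd (n p : ℕ) (hn0 : n ≠ 0) (hp : p.Prime) :
    σ 1 (p ^ n.factorization p) ∣ σ 1 n := by
  have hco : (p ^ n.factorization p).Coprime (n / p ^ n.factorization p) :=
    Nat.Coprime.pow_left _ (Nat.coprime_ordCompl hp hn0)
  have hmul := isMultiplicative_sigma (k := 1) |>.map_mul_of_coprime hco
  rw [Nat.ordProj_mul_ordCompl_eq_self n p] at hmul
  exact ⟨_, hmul⟩

open ArithmeticFunction in
lemma not_even (n : ℕ) (hn0 : n ≠ 0) (hne : n ≠ 10) (heq : 5 * σ 1 n = 9 * n) :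
    ¬ 2 ∣ n := by
  intro h2
  have h5 : 5 ∣ n := by
    have h59 : (5:ℕ) ∣ 9 * n := ⟨σ 1 n, heq.symm⟩
    rcases (Nat.Prime.dvd_mul (by norm_num)).mp h59 with h | h
    · norm_num at h
    · exact h
  have h10 : 10 ∣ n := Nat.Coprime.mul_dvd_of_dvd_of_dvd (by norm_num) h2 h5
  obtain ⟨c, rfl⟩ := h10
  have hc2 : 2 ≤ c := by
    by_contra h
    interval_cases c <;> simp_all
  have hsub : ({1, c, 2*c, 5*c, 10*c} : Finset ℕ) ⊆ (10*c).divisors := by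
    intro d hd
    rw [Nat.mem_divisors]
    refine ⟨?_, hn0⟩
    simp only [Finset.mem_insert, Finset.mem_singleton] at hd
    rcases hd with rfl|rfl|rfl|rfl|rfl
    · exact one_dvd _
    · exact ⟨10, by ring⟩
    · exact ⟨5, by ring⟩
    · exact ⟨2, by ring⟩
    · exact dvd_rfl
  have hsum : ∑ d ∈ ({1, c, 2*c, 5*c, 10*c} : Finset ℕ), d = 1 + 18 * c := by
    rw [Finset.sum_insert (by simp; omega), Finset.sum_insert (by simp; omega),
      Finset.sum_insert (by simp; omega), Finset.sum_insert (by simp; omega),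
      Finset.sum_singleton]
    ring
  have hle : 1 + 18 * c ≤ σ 1 (10*c) := by
    rw [sigma_one_apply, ← hsum]
    exact Finset.sum_le_sum_of_subset hsub
  omega

end Helpers

/-- The abundancy index `σ(n)/n` as a rational number. -/
noncomputable def abundancy (n : ℕ) : ℚ := (ArithmeticFunction.sigma 1 n : ℚ) / n

/-- `m` is a friend of `n` if they are distinct positive integers with the same
abundancy index. -/
def IsFriend (m n : ℕ) : Prop := 0 < m ∧ 0 < n ∧ m ≠ n ∧ abundancy m = abundancy n

theorem max_exponent_of_five (n : ℕ) (hn : IsFriend n 10) (k : ℕ)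
    (hk : k = n.primeFactors.card) :
    padicValNat 5 n ≤ (k - 1) ^ 2 + 1 := by
  obtain ⟨hn0', -, hne, hab⟩ := hn
  have hn0 : n ≠ 0 := hn0'.ne'
  have hsig10 : σ 1 10 = 18 := by rw [sigma_one_apply]; decide
  have heq : 5 * σ 1 n = 9 * n := by
    unfold abundancy at hab
    rw [hsig10] at hab
    rw [div_eq_div_iff (by exact_mod_cast hn0'.ne' : (n:ℚ) ≠ 0) (by norm_num)] at hab
    have : (σ 1 n : ℚ) * 10 = 18 * n := by push_cast at hab ⊢; linarith
    have hnat : σ 1 n * 10 = 18 * n := by exact_mod_cast this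
    omega
  have h5n : 5 ∣ n := by
    have h59 : (5:ℕ) ∣ 9 * n := ⟨σ 1 n, heq.symm⟩
    rcases (Nat.Prime.dvd_mul (by norm_num)).mp h59 with h | h
    · norm_num at h
    · exact h
  have hodd : ¬ 2 ∣ n := not_even n hn0 hne heq
  have hsignz : σ 1 n ≠ 0 := by intro h; rw [h] at heq; omega
  -- σ n is odd
  have hsigodd : ¬ 2 ∣ σ 1 n := by omega
  -- 5 ∈ primeFactors
  have h5mem : 5 ∈ n.primeFactors := Nat.mem_primeFactors.mpr ⟨by norm_num, h5n, hn0⟩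
  -- valuation of sigma
  have hval : 1 + padicValNat 5 (σ 1 n) = padicValNat 5 n := by
    have h1 : padicValNat 5 (5 * σ 1 n) = 1 + padicValNat 5 (σ 1 n) := by
      rw [padicValNat.mul (by norm_num) hsignz, padicValNat.self (by norm_num)]
    have h2 : padicValNat 5 (9 * n) = padicValNat 5 n := by
      rw [padicValNat.mul (by norm_num) hn0,
        padicValNat.eq_zero_of_not_dvd (by norm_num), zero_add]
    rw [← h1, ← h2, heq]
  -- factor sigma over prime factors
  have hfact : σ 1 n = ∏ p ∈ n.primeFactors, σ 1 (p ^ n.factorization p) := by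
    have := (isMultiplicative_sigma (k := 1)).multiplicative_factorization _ hn0
    rw [this, Finsupp.prod]
    rw [Nat.support_factorization]
  have hterm_nz : ∀ p ∈ n.primeFactors, σ 1 (p ^ n.factorization p) ≠ 0 := by
    intro p hp
    have hpp : p.Prime := Nat.prime_of_mem_primeFactors hp
    rw [sigma_pp _ _ hpp]
    exact (S_pos _ _ (by omega)).ne'
  have hsum : padicValNat 5 (σ 1 n) =
      ∑ p ∈ n.primeFactors, padicValNat 5 (σ 1 (p ^ n.factorization p)) := by
    rw [hfact] at *
    exact padicValNat_prod _ _ hterm_nz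
  -- split off p = 5
  have hsplit : ∑ p ∈ n.primeFactors, padicValNat 5 (σ 1 (p ^ n.factorization p)) =
      (∑ p ∈ n.primeFactors.erase 5, padicValNat 5 (σ 1 (p ^ n.factorization p)))
        + padicValNat 5 (σ 1 (5 ^ n.factorization 5)) :=
    (Finset.sum_erase_add _ _ h5mem).symm
  have hv5 : padicValNat 5 (σ 1 (5 ^ n.factorization 5)) = 0 := by
    rw [sigma_pp _ _ (by norm_num)]
    exact padicValNat.eq_zero_of_not_dvd (five_ndvd_S5 _)
  -- bound each term
  have hbound : ∀ p ∈ n.primeFactors.erase 5,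
      padicValNat 5 (σ 1 (p ^ n.factorization p)) ≤ (n.primeFactors.erase 5).card := by
    intro p hp
    obtain ⟨hp5, hpmem⟩ := Finset.mem_erase.mp hp
    have hpp : p.Prime := Nat.prime_of_mem_primeFactors hpmem
    have hpdvd : p ∣ n := Nat.dvd_of_mem_primeFactors hpmem
    have hp2 : p ≠ 2 := by rintro rfl; exact hodd hpdvd
    set a := n.factorization p with hadef
    have hsdvd : σ 1 (p ^ a) ∣ σ 1 n := sigma_pp_dvd n p hn0 hpp
    have haodd : ¬ 2 ∣ S p (a + 1) := by
      intro h
      apply hsigodd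
      rw [← sigma_pp _ _ hpp] at h
      exact h.trans hsdvd
    have haeven : Even a := by
      by_contra hodd'
      apply haodd
      have hh1 : 2 ∣ p - 1 := by
        have : ¬ 2 ∣ p := by
          intro h
          exact hp2 ((Nat.prime_dvd_prime_iff_eq (by norm_num) hpp).mp h).symm
        have := hpp.two_le
        omega
      have hh2 : 2 ∣ a + 1 := by
        rw [Nat.even_iff] at hodd'
        omega
      exact L12' 2 p (a+1) hpp.one_le hh1 hh2
    rw [sigma_pp _ _ hpp]
    exact key n p a hn0 hpp hp5 haeven (by rw [← sigma_pp _ _ hpp]; exact hsdvd) heq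
  have hcard : (n.primeFactors.erase 5).card = k - 1 := by
    rw [Finset.card_erase_of_mem h5mem, hk]
  have hsum_le : ∑ p ∈ n.primeFactors.erase 5, padicValNat 5 (σ 1 (p ^ n.factorization p))
      ≤ (k-1) * (k-1) := by
    have := Finset.sum_le_card_nsmul (n.primeFactors.erase 5)
      (fun p => padicValNat 5 (σ 1 (p ^ n.factorization p))) _ hbound
    rw [hcard] at this
    simpa [smul_eq_mul] using this
  have : padicValNat 5 n ≤ 1 + (k-1) * (k-1) := by omega
  calc padicValNat 5 n ≤ 1 + (k-1)*(k-1) := this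
    _ = (k-1)^2 + 1 := by ring
end

section
/- Let p be a prime with p ≥ 7 and let n be a friend of 2p. Then n is odd, p divides n, and n has at least two distinct prime factors, i.e. ω(n) ≥ 2. If additionally p ≡ 1 (mod 4), then n is a perfect square. -/
open ArithmeticFunction

open scoped ArithmeticFunction.sigma

/-- A natural number with all factorization exponents even is a square. -/
lemma aux_isSquare_of_even_factorization (n : ℕ) (hn : n ≠ 0)
    (h : ∀ q, Even (n.factorization q)) : IsSquare n := by
  refine ⟨n.factorization.prod (fun q e => q ^ (e / 2)), ?_⟩
  conv_lhs => rw [← Nat.factorization_prod_pow_eq_self hn]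
  rw [Finsupp.prod, Finsupp.prod, ← Finset.prod_mul_distrib]
  refine Finset.prod_congr rfl fun q hq => ?_
  obtain ⟨k, hk⟩ := h q
  rw [hk, ← pow_add]
  congr 1
  omega

/-- Strict monotonicity of the abundancy index on proper divisors. -/
lemma aux_sigma_lt {d n : ℕ} (hd : 0 < d) (hdn : d ∣ n) (hlt : d < n) :
    n * σ 1 d < d * σ 1 n := by
  obtain ⟨k, rfl⟩ := hdn
  have hk2 : 2 ≤ k := by
    rcases Nat.lt_or_ge k 2 with h | h
    · interval_cases k <;> omega
    · exact h
  have himage : (d.divisors.image (· * k)) ⊆ (d * k).divisors := by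
    intro x hx
    simp only [Finset.mem_image] at hx
    obtain ⟨e, he, rfl⟩ := hx
    rw [Nat.mem_divisors] at he ⊢
    exact ⟨mul_dvd_mul he.1 dvd_rfl, by positivity⟩
  have h1mem : 1 ∈ (d * k).divisors := Nat.one_mem_divisors.mpr (by positivity)
  have h1not : 1 ∉ d.divisors.image (· * k) := by
    simp only [Finset.mem_image, not_exists]
    rintro e ⟨he, hek⟩
    nlinarith [Nat.pos_of_mem_divisors he]
  have hsum : ∑ x ∈ d.divisors.image (· * k), x = k * σ 1 d := by
    rw [Finset.sum_image (fun a _ b _ hab => by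
      exact Nat.eq_of_mul_eq_mul_right (by omega) hab)]
    rw [sigma_one_apply, Finset.mul_sum]
    exact Finset.sum_congr rfl fun x _ => mul_comm x k
  have hle : 1 + k * σ 1 d ≤ σ 1 (d * k) := by
    have h2 : ∑ x ∈ insert 1 (d.divisors.image (· * k)), x ≤ ∑ x ∈ (d * k).divisors, x :=
      Finset.sum_le_sum_of_subset (Finset.insert_subset h1mem himage)
    rw [Finset.sum_insert h1not] at h2
    rw [← hsum, sigma_one_apply (d * k)]
    exact h2
  calc d * k * σ 1 d = d * (k * σ 1 d) := by ring
    _ < d * (1 + k * σ 1 d) := mul_lt_mul_of_pos_left (by omega) hd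
    _ ≤ d * σ 1 (d * k) := Nat.mul_le_mul_left _ hle

theorem friend_of_two_p (p : ℕ) (hp : p.Prime) (hp7 : 7 ≤ p)
    (n : ℕ) (hn : IsFriend n (2 * p)) :
    Odd n ∧ p ∣ n ∧ 2 ≤ n.primeFactors.card ∧ (p % 4 = 1 → IsSquare n) := by
  obtain ⟨hn0, h2p0, hne, habu⟩ := hn
  unfold abundancy at habu
  have hcop : Nat.Coprime 2 p := (Nat.coprime_primes Nat.prime_two hp).mpr (by omega)
  have hσ2p : σ 1 (2 * p) = 3 * (p + 1) := by
    rw [isMultiplicative_sigma.map_mul_of_coprime hcop]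
    have h2 : σ 1 2 = 3 := by rw [sigma_one_apply]; decide
    have hps : σ 1 p = 1 + p := by
      rw [sigma_one_apply, hp.divisors, Finset.sum_pair (by omega)]
    rw [h2, hps]; ring
  have key : σ 1 n * (2 * p) = 3 * (p + 1) * n := by
    rw [hσ2p] at habu
    have hq : (σ 1 n : ℚ) * (2 * p) = (3 * (p + 1)) * n := by
      have h1 : (n : ℚ) ≠ 0 := by positivity
      have h2 : ((2 : ℚ) * ((p : ℕ) : ℚ)) ≠ 0 := by
        have : (0 : ℚ) < p := by exact_mod_cast hp.pos
        positivity
      push_cast at habu ⊢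
      field_simp at habu
      linarith [habu]
    exact_mod_cast hq
  -- p divides n
  have hpn : p ∣ n := by
    have h1 : p ∣ 3 * (p + 1) * n := ⟨σ 1 n * 2, by linarith [key]⟩
    rcases (Nat.Prime.dvd_mul hp).mp h1 with h | h
    · rcases (Nat.Prime.dvd_mul hp).mp h with h3 | h4
      · have := Nat.le_of_dvd (by norm_num) h3; omega
      · have h5 := Nat.dvd_sub h4 (dvd_refl p)
        simp only [Nat.add_sub_cancel_left] at h5
        have := Nat.le_of_dvd one_pos h5; omega
    · exact h
  have hne1 : n ≠ 1 := by
    rintro rfl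
    simp [sigma_one_apply] at key
    omega
  -- n is odd
  have hodd : Odd n := by
    rw [Nat.odd_iff]
    by_contra h
    have h2 : 2 ∣ n := by omega
    have hdvd : 2 * p ∣ n := Nat.Coprime.mul_dvd_of_dvd_of_dvd hcop h2 hpn
    have hlt : 2 * p < n :=
      lt_of_le_of_ne (Nat.le_of_dvd hn0 hdvd) (Ne.symm hne)
    have hstrict := aux_sigma_lt (d := 2 * p) (by omega) hdvd hlt
    rw [hσ2p] at hstrict
    nlinarith [key, hstrict]
  -- at least two prime factors
  have hω : 2 ≤ n.primeFactors.card := by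
    by_contra h
    push_neg at h
    have hmem : p ∈ n.primeFactors := Nat.mem_primeFactors.mpr ⟨hp, hpn, hn0.ne'⟩
    have hall : ∀ {q : ℕ}, q.Prime → q ∣ n → q = p := by
      intro q hq hqn
      have hq' : q ∈ n.primeFactors := Nat.mem_primeFactors.mpr ⟨hq, hqn, hn0.ne'⟩
      by_contra hne'
      have : 1 < n.primeFactors.card := Finset.one_lt_card.mpr ⟨q, hq', p, hmem, hne'⟩
      omega
    have hnp := Nat.eq_prime_pow_of_unique_prime_dvd hn0.ne' hall
    set L := n.primeFactorsList.length with hL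
    have hL1 : 1 ≤ L := by
      by_contra hL0
      push_neg at hL0
      interval_cases L
      · rw [pow_zero] at hnp; exact hne1 hnp
    rw [hnp, sigma_one_apply_prime_pow hp] at key
    have hZ : ((∑ k ∈ Finset.range (L + 1), (p : ℤ) ^ k)) * (2 * p)
        = 3 * ((p : ℤ) + 1) * (p : ℤ) ^ L := by exact_mod_cast key
    have hgeom : (∑ k ∈ Finset.range (L + 1), (p : ℤ) ^ k) * ((p : ℤ) - 1)
        = (p : ℤ) ^ (L + 1) - 1 := geom_sum_mul _ _
    have hpL : (1 : ℤ) ≤ (p : ℤ) ^ L := by exact_mod_cast Nat.one_le_pow L p hp.pos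
    have hp7' : (7 : ℤ) ≤ (p : ℤ) := by exact_mod_cast hp7
    have hps : (p : ℤ) ^ (L + 1) = (p : ℤ) * (p : ℤ) ^ L := by ring
    rw [hps] at hgeom
    nlinarith [hZ, hgeom, hpL, hp7', mul_le_mul_of_nonneg_left hpL (by nlinarith : (0:ℤ) ≤ (p:ℤ)^2 - 3)]
  -- square when p ≡ 1 mod 4
  have hsq : p % 4 = 1 → IsSquare n := by
    intro h4
    have hnodd : n % 2 = 1 := Nat.odd_iff.mp hodd
    have hσodd : Odd (σ 1 n) := by
      rw [Nat.odd_iff]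
      by_contra hE
      have h2 : 2 ∣ σ 1 n := by omega
      obtain ⟨s, hs⟩ := h2
      set t := (p + 1) / 2 with ht0
      have ht : p + 1 = 2 * t := by omega
      have ht2 : t % 2 = 1 := by omega
      rw [hs, ht] at key
      have h' : 2 * (s * p) = 3 * (t * n) := by linarith [key]
      have hoddR : Odd (3 * (t * n)) :=
        (by decide : Odd 3).mul ((Nat.odd_iff.mpr ht2).mul hodd)
      rw [← h', Nat.odd_iff] at hoddR
      omega
    apply aux_isSquare_of_even_factorization n hn0.ne'
    intro q
    by_cases hq : q ∈ n.primeFactors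
    · have hq' : q.Prime := Nat.prime_of_mem_primeFactors hq
      have hqdvd : q ∣ n := Nat.dvd_of_mem_primeFactors hq
      have hqodd : q % 2 = 1 := by
        rcases hq'.eq_two_or_odd with h2 | h2
        · subst h2
          obtain ⟨c, hc⟩ := hqdvd
          omega
        · exact h2
      set e := n.factorization q with he
      by_contra hodd_e
      have he2 : e % 2 = 1 := Nat.not_even_iff.mp hodd_e
      have hprod := Nat.sum_divisors hn0.ne'
      have hfac_dvd : (∑ k ∈ Finset.range (e + 1), q ^ k) ∣ σ 1 n := by
        rw [sigma_one_apply, hprod]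
        exact Finset.dvd_prod_of_mem _ hq
      have hsum2 : (∑ k ∈ Finset.range (e + 1), q ^ k) % 2 = (e + 1) % 2 := by
        rw [Finset.sum_nat_mod]
        have hone : ∀ k ∈ Finset.range (e + 1), q ^ k % 2 = 1 := by
          intro k _
          simp [Nat.pow_mod, hqodd]
        rw [Finset.sum_congr rfl hone, Finset.sum_const, Finset.card_range, smul_eq_mul, mul_one]
      have h2d : 2 ∣ σ 1 n :=
        dvd_trans (Nat.dvd_of_mod_eq_zero (by omega)) hfac_dvd
      rw [Nat.odd_iff] at hσodd
      omega
    · rw [← Nat.support_factorization] at hq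
      rw [Finsupp.notMem_support_iff.mp hq]
      exact Even.zero
  exact ⟨hodd, hpn, hω, hsq⟩
end
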